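/- Let p be a prime, n a positive natural number, and m = p^n. Let V = Fin m → ZMod p, let A ∈ GL_m(ZMod p) be the Jordan block with eigenvalue 1 (entries 1 on the diagonal and first superdiagonal, 0 elsewhere), and let G be the semidirect product of the additive group V by the cyclic subgroup generated by A inside GL_m(ZMod p), where A acts on V by matrix-vector multiplication. Then the exponent of the group G is exactly p^(n+1). -/

import Mathlib

/-- The nilpotent upper-triangular Jordan block: entry `(i,j)` is `1` if `j = i + 1`
and `0` otherwise. -/
def jordanNilp (p m : ℕ) : Matrix (Fin m) (Fin m) (ZMod p) :=
  Matrix.of fun i j => if (j : ℕ) = (i : ℕ) + 1 then 1 else 0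

/-- The additive automorphism of `V = Fin m → ZMod p` given by right matrix-vector
multiplication (`vecMul`) by an invertible matrix `g`, i.e. `v ↦ v · g`. -/
def vecMulAut {p m : ℕ} (g : GL (Fin m) (ZMod p)) : AddAut (Fin m → ZMod p) where
  toFun v := Matrix.vecMul v (g : Matrix (Fin m) (Fin m) (ZMod p))
  invFun v := Matrix.vecMul v ((↑(g⁻¹) : Matrix (Fin m) (Fin m) (ZMod p)))
  left_inv v := by simp [Matrix.vecMul_vecMul]
  right_inv v := by simp [Matrix.vecMul_vecMul]
  map_add' u v := Matrix.add_vecMul (g : Matrix (Fin m) (Fin m) (ZMod p)) u v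

set_option maxHeartbeats 1000000 in
/-- The action of the cyclic subgroup `⟨A⟩ = Subgroup.zpowers A` on the (multiplicative
version of the) additive group `V = Fin m → ZMod p`, a matrix acting by right
matrix-vector multiplication `v ↦ v · A`. -/
def holPhi {p m : ℕ} (A : GL (Fin m) (ZMod p)) :
    ↥(Subgroup.zpowers A) →* MulAut (Multiplicative (Fin m → ZMod p)) where
  toFun g := AddEquiv.toMultiplicative (vecMulAut (g : GL (Fin m) (ZMod p)))
  map_one' := by
    ext v
    simp [vecMulAut, AddEquiv.toMultiplicative]
  map_mul' g h := by
    rw [show g * h = h * g by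
      obtain ⟨k, hk⟩ := Subgroup.mem_zpowers_iff.mp g.2
      obtain ⟨l, hl⟩ := Subgroup.mem_zpowers_iff.mp h.2
      apply Subtype.ext
      rw [Subgroup.coe_mul, Subgroup.coe_mul, ← hk, ← hl, ← zpow_add, ← zpow_add, add_comm]]
    ext v
    simp [vecMulAut, AddEquiv.toMultiplicative, Matrix.vecMul_vecMul]

open Finset

lemma jordanNilp_apply (p m : ℕ) (i j : Fin m) :
    jordanNilp p m i j = if (j : ℕ) = (i : ℕ) + 1 then 1 else 0 := rfl

lemma jordan_pow_apply (p m k : ℕ) (i j : Fin m) :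
    ((jordanNilp p m) ^ k) i j = if (j : ℕ) = (i : ℕ) + k then 1 else 0 := by
  induction k generalizing j with
  | zero => simp [Matrix.one_apply, Fin.ext_iff, eq_comm]
  | succ k ih =>
    rw [pow_succ, Matrix.mul_apply]
    simp only [ih, jordanNilp_apply, ite_mul, one_mul, zero_mul]
    by_cases h : (i : ℕ) + k < m
    · rw [Finset.sum_eq_single (⟨(i : ℕ) + k, h⟩ : Fin m)]
      · simp [Nat.add_assoc]
      · intro b _ hb
        rw [if_neg (fun hc => hb (Fin.ext hc))]
      · intro hmem; exact absurd (Finset.mem_univ _) hmem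
    · rw [Finset.sum_eq_zero, if_neg]
      · have := j.is_lt; omega
      · intro b _
        rw [if_neg]
        have := b.is_lt; omega

lemma jordan_pow_m (p m : ℕ) : (jordanNilp p m) ^ m = 0 := by
  ext i j
  rw [jordan_pow_apply, if_neg, Matrix.zero_apply]
  have := j.is_lt; omega

lemma expand_pow (p m e : ℕ) :
    ((jordanNilp p m) + 1) ^ e = ∑ k ∈ range (e + 1), e.choose k • (jordanNilp p m) ^ k := by
  rw [(Commute.one_right (jordanNilp p m)).add_pow]
  refine Finset.sum_congr rfl fun k _ => ?_
  rw [one_pow, mul_one, ← (Nat.cast_commute (e.choose k) ((jordanNilp p m) ^ k)).eq,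
    ← nsmul_eq_mul]

lemma A_entry (p m : ℕ) (hm0 : 0 < m) (e : ℕ) :
    (((1 : Matrix (Fin m) (Fin m) (ZMod p)) + jordanNilp p m) ^ e) ⟨0, hm0⟩
      ⟨m - 1, by omega⟩ = (e.choose (m - 1) : ZMod p) := by
  rw [add_comm, expand_pow, Matrix.sum_apply]
  simp only [Matrix.smul_apply, jordan_pow_apply, smul_ite, smul_zero, nsmul_eq_mul, mul_one]
  simp only [zero_add]
  rw [Finset.sum_ite_eq (range (e + 1)) (m - 1) (fun k => ((e.choose k : ZMod p)))]
  by_cases he : m - 1 ≤ e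
  · rw [if_pos (Finset.mem_range.mpr (by omega))]
  · rw [if_neg (by simp; omega), Nat.choose_eq_zero_of_lt (by omega), Nat.cast_zero]

lemma sum_choose (p m : ℕ) (hm0 : 0 < m) :
    ∑ e ∈ range m, ((e.choose (m - 1) : ZMod p)) = 1 := by
  rw [Finset.sum_eq_single (m - 1)]
  · rw [Nat.choose_self, Nat.cast_one]
  · intro b hb hne
    rw [Nat.choose_eq_zero_of_lt (by simp at hb; omega), Nat.cast_zero]
  · intro hmem; exact absurd (Finset.mem_range.mpr (by omega)) hmem

lemma sd_pow_right {N H : Type*} [Group N] [Group H] (φ : H →* MulAut N)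
    (g : N ⋊[φ] H) (e : ℕ) : (g ^ e).right = g.right ^ e :=
  map_pow SemidirectProduct.rightHom g e

lemma sd_pow_left {N H : Type*} [CommGroup N] [Group H] (φ : H →* MulAut N)
    (g : N ⋊[φ] H) (e : ℕ) :
    (g ^ e).left = ∏ i ∈ range e, φ (g.right ^ i) g.left := by
  induction e with
  | zero => simp
  | succ e ih =>
    rw [pow_succ, SemidirectProduct.mul_left, ih, prod_range_succ, sd_pow_right]

set_option maxHeartbeats 1000000 in
theorem exponent_holomorph_jordan_block_boundary (p m n : ℕ) [Fact p.Prime]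
    (hn : 0 < n) (hm : m = p ^ n)
    (A : GL (Fin m) (ZMod p))
    (hA : (A : Matrix (Fin m) (Fin m) (ZMod p)) = 1 + jordanNilp p m) :
    Monoid.exponent (Multiplicative (Fin m → ZMod p) ⋊[holPhi A] ↥(Subgroup.zpowers A))
      = p ^ (n + 1) := by
  have hp := (Fact.out : p.Prime)
  have hm0 : 0 < m := hm ▸ pow_pos hp.pos n
  haveI : Nonempty (Fin m) := ⟨⟨0, hm0⟩⟩
  -- A ^ (p ^ n) = 1
  have hApow : A ^ (p ^ n) = 1 := by
    apply Units.ext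
    rw [Units.val_pow_eq_pow_val, hA, Units.val_one,
      add_pow_char_pow_of_commute p n (Commute.one_left (jordanNilp p m)), one_pow, ← hm,
      jordan_pow_m, add_zero]
  -- every element of the cyclic subgroup has order dividing p ^ n
  have hbpow : ∀ b : ↥(Subgroup.zpowers A), b ^ (p ^ n) = 1 := by
    intro b
    obtain ⟨z, hz⟩ := b.2
    have hcoe : ((b ^ (p ^ n) : ↥(Subgroup.zpowers A)) : GL (Fin m) (ZMod p)) = 1 := by
      rw [SubmonoidClass.coe_pow, ← hz, ← zpow_natCast (A ^ z), ← zpow_mul,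
        mul_comm z ((p ^ n : ℕ) : ℤ), zpow_mul, zpow_natCast, hApow, one_zpow]
    exact Subtype.ext (by rw [hcoe]; rfl)
  -- every v : V satisfies v ^ p = 1
  have vpow : ∀ x : Multiplicative (Fin m → ZMod p), x ^ p = 1 := by
    intro x
    have hz : (p • x.toAdd) = 0 := by
      funext i
      simp [nsmul_eq_mul, ZMod.natCast_self]
    rw [← ofAdd_toAdd x, ← ofAdd_nsmul, hz, ofAdd_zero]
  -- upper bound : every element has g ^ (p ^ (n+1)) = 1
  have key : ∀ g : Multiplicative (Fin m → ZMod p) ⋊[holPhi A] ↥(Subgroup.zpowers A),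
      g ^ (p ^ (n + 1)) = 1 := by
    intro g
    have hr : (g ^ (p ^ n)).right = 1 := by rw [sd_pow_right]; exact hbpow g.right
    have hstep : p ^ (n + 1) = p ^ n * p := by ring
    rw [hstep, pow_mul]
    ext
    · rw [sd_pow_left]
      simp only [hr, one_pow, map_one, MulAut.one_apply, Finset.prod_const, Finset.card_range]
      rw [vpow]
      rfl
    · rw [sd_pow_right, hr, one_pow]
      rfl
  -- the lower bound element
  set i0 : Fin m := ⟨0, hm0⟩ with hi0
  set jl : Fin m := ⟨m - 1, by omega⟩ with hjl
  set v : Multiplicative (Fin m → ZMod p) :=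
    Multiplicative.ofAdd (Pi.single i0 (1 : ZMod p)) with hv
  set g0 : Multiplicative (Fin m → ZMod p) ⋊[holPhi A] ↥(Subgroup.zpowers A) :=
    ⟨v, ⟨A, Subgroup.mem_zpowers A⟩⟩ with hg0def
  have hg0 : g0 ^ (p ^ n) ≠ 1 := by
    intro hcon
    have h1 : Multiplicative.toAdd ((g0 ^ (p ^ n)).left) jl = 1 := by
      rw [sd_pow_left, toAdd_prod, Finset.sum_apply]
      have hterm : ∀ i : ℕ,
          Multiplicative.toAdd ((holPhi A) ((g0.right) ^ i) g0.left) jl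
            = (i.choose (m - 1) : ZMod p) := by
        intro i
        show Multiplicative.toAdd
          ((AddEquiv.toMultiplicative (vecMulAut (((g0.right) ^ i : ↥(Subgroup.zpowers A))
            : GL (Fin m) (ZMod p)))) g0.left) jl = _
        have hc : (((g0.right) ^ i : ↥(Subgroup.zpowers A)) : GL (Fin m) (ZMod p)) = A ^ i := by
          rw [SubmonoidClass.coe_pow]
        simp only [AddEquiv.toMultiplicative, vecMulAut, hc, AddEquiv.coe_mk, Equiv.coe_fn_mk]
        show (Matrix.vecMul (Multiplicative.toAdd g0.left)
          ((A ^ i : GL (Fin m) (ZMod p)) : Matrix (Fin m) (Fin m) (ZMod p))) jl = _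
        rw [show Multiplicative.toAdd g0.left = Pi.single i0 (1 : ZMod p) from rfl,
          Units.val_pow_eq_pow_val, hA, Matrix.single_vecMul]
        simp only [one_smul, Matrix.row_apply]
        exact A_entry p m hm0 i
      rw [Finset.sum_congr rfl (fun i _ => hterm i), ← hm]
      exact sum_choose p m hm0
    rw [hcon] at h1
    simp only [SemidirectProduct.one_left, toAdd_one, Pi.zero_apply] at h1
    exact zero_ne_one h1
  -- conclude
  have hdvd : orderOf g0 ∣ p ^ (n + 1) := orderOf_dvd_of_pow_eq_one (key g0)
  obtain ⟨k, hk, hord⟩ := (Nat.dvd_prime_pow hp).mp hdvd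
  have hk' : k = n + 1 := by
    by_contra hne
    have hdvd' : orderOf g0 ∣ p ^ n := hord ▸ pow_dvd_pow p (by omega)
    exact hg0 (orderOf_dvd_iff_pow_eq_one.mp hdvd')
  have hlow : p ^ (n + 1) ∣ Monoid.exponent
      (Multiplicative (Fin m → ZMod p) ⋊[holPhi A] ↥(Subgroup.zpowers A)) := by
    have : orderOf g0 = p ^ (n + 1) := hk' ▸ hord
    exact this ▸ Monoid.order_dvd_exponent g0
  exact Nat.dvd_antisymm (Monoid.exponent_dvd_of_forall_pow_eq_one key) hlow
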